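/- Let P be a π-stationary transition matrix on the finite product state space X = X^(1) × … × X^(d), and let Π be the transition matrix on X whose every row equals π. Then the map S ↦ D(P^(S) ‖ Π^(S)) on subsets S ⊆ ⟦d⟧ is monotonically non-decreasing: D(P^(S) ‖ Π^(S)) ≤ D(P^(T) ‖ Π^(T)) whenever S ⊆ T ⊆ ⟦d⟧. -/

import Mathlib

open scoped Classical

noncomputable section

variable {d : ℕ}

/-- A `k`-tuple of subsets is pairwise disjoint (i.e. it is an element of `(k+1)^U`). -/
def PwDisj {α : Type*} {k : ℕ} (S : Fin k → Finset α) : Prop :=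
  ∀ i j : Fin k, i ≠ j → Disjoint (S i) (S j)

/-- Restriction of a global state to the coordinates in `S`. -/
def restrict (𝒳 : Fin d → Type) (S : Finset (Fin d)) (x : ∀ i, 𝒳 i) :
    ∀ i : S, 𝒳 i.1 := fun i => x i.1

/-- Marginal of `π` on the coordinates in `S`. -/
def marginal (𝒳 : Fin d → Type) [∀ i, Fintype (𝒳 i)]
    (π : (∀ i, 𝒳 i) → ℝ) (S : Finset (Fin d)) (z : ∀ i : S, 𝒳 i.1) : ℝ :=
  ∑ x : ∀ i, 𝒳 i, if restrict 𝒳 S x = z then π x else 0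

/-- Keep-`S`-in transition matrix of `P` with respect to `π`. -/
def keepIn (𝒳 : Fin d → Type) [∀ i, Fintype (𝒳 i)]
    (π : (∀ i, 𝒳 i) → ℝ) (P : (∀ i, 𝒳 i) → (∀ i, 𝒳 i) → ℝ)
    (S : Finset (Fin d)) (z w : ∀ i : S, 𝒳 i.1) : ℝ :=
  (∑ x : ∀ i, 𝒳 i, ∑ y : ∀ i, 𝒳 i,
      if restrict 𝒳 S x = z ∧ restrict 𝒳 S y = w then π x * P x y else 0) /
    marginal 𝒳 π S z

/-- Entropy rate of a transition matrix `M` with respect to `μ`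
    (with the convention `0 ln 0 = 0`). -/
def entRate {Y : Type*} [Fintype Y] (μ : Y → ℝ) (M : Y → Y → ℝ) : ℝ :=
  -∑ x, ∑ y, μ x * M x y * Real.log (M x y)

/-- KL divergence rate from `L` to `M` with respect to `μ`
    (with the convention `0 ln (0/a) = 0`). -/
def klRate {Y : Type*} [Fintype Y] (μ : Y → ℝ) (M L : Y → Y → ℝ) : ℝ :=
  ∑ x, ∑ y, μ x * M x y * Real.log (M x y / L x y)

/-- Keep-`{i}`-in single-coordinate transition matrix `P^(i)`. -/
def single (𝒳 : Fin d → Type) [∀ i, Fintype (𝒳 i)]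
    (π : (∀ i, 𝒳 i) → ℝ) (P : (∀ i, 𝒳 i) → (∀ i, 𝒳 i) → ℝ)
    (i : Fin d) (a b : 𝒳 i) : ℝ :=
  (∑ x : ∀ j, 𝒳 j, ∑ y : ∀ j, 𝒳 j, if x i = a ∧ y i = b then π x * P x y else 0) /
    (∑ x : ∀ j, 𝒳 j, if x i = a then π x else 0)

/-- Tensor product over `S` of the single-coordinate matrices `P^(i)`, `i ∈ S`. -/
def indepKernel (𝒳 : Fin d → Type) [∀ i, Fintype (𝒳 i)]
    (π : (∀ i, 𝒳 i) → ℝ) (P : (∀ i, 𝒳 i) → (∀ i, 𝒳 i) → ℝ)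
    (S : Finset (Fin d)) (z w : ∀ i : S, 𝒳 i.1) : ℝ :=
  ∏ i : S, single 𝒳 π P i.1 (z i) (w i)

/-- Distance to independence `𝕀(P^(S)) = D(P^(S) ‖ ⊗_{i ∈ S} P^(i))`. -/
def distToIndep (𝒳 : Fin d → Type) [∀ i, Fintype (𝒳 i)]
    (π : (∀ i, 𝒳 i) → ℝ) (P : (∀ i, 𝒳 i) → (∀ i, 𝒳 i) → ℝ)
    (S : Finset (Fin d)) : ℝ :=
  klRate (marginal 𝒳 π S) (keepIn 𝒳 π P S) (indepKernel 𝒳 π P S)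

/-- Entropy rate `H(P^(S))` of the keep-`S`-in transition matrix. -/
def entKeepIn (𝒳 : Fin d → Type) [∀ i, Fintype (𝒳 i)]
    (π : (∀ i, 𝒳 i) → ℝ) (P : (∀ i, 𝒳 i) → (∀ i, 𝒳 i) → ℝ)
    (S : Finset (Fin d)) : ℝ :=
  entRate (marginal 𝒳 π S) (keepIn 𝒳 π P S)

/-- Distance to stationarity `D(P^(S) ‖ Π^(S))`, where every row of `Π^(S)` is `π^(S)`. -/
def distToStat (𝒳 : Fin d → Type) [∀ i, Fintype (𝒳 i)]
    (π : (∀ i, 𝒳 i) → ℝ) (P : (∀ i, 𝒳 i) → (∀ i, 𝒳 i) → ℝ)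
    (S : Finset (Fin d)) : ℝ :=
  klRate (marginal 𝒳 π S) (keepIn 𝒳 π P S) (fun _ w => marginal 𝒳 π S w)

/-- Single-coordinate marginal `π^(i)`. -/
def singleMarginal (𝒳 : Fin d → Type) [∀ i, Fintype (𝒳 i)]
    (π : (∀ i, 𝒳 i) → ℝ) (i : Fin d) (a : 𝒳 i) : ℝ :=
  ∑ x : ∀ j, 𝒳 j, if x i = a then π x else 0



def myFib {W Z : Type*} [Fintype W] (f : W → Z) (p : W → ℝ) (z : Z) : ℝ :=
  ∑ w, if f w = z then p w else 0

def myFdiv (a b : ℝ) : ℝ := a * Real.log (a / b)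

lemma myFib_nonneg {W Z : Type*} [Fintype W] (f : W → Z) (p : W → ℝ)
    (hp : ∀ w, 0 ≤ p w) (z : Z) : 0 ≤ myFib f p z := by
  apply Finset.sum_nonneg; intro w _; split <;> simp [hp w]

lemma myFib_zero {W Z : Type*} [Fintype W] (f : W → Z) (p q : W → ℝ)
    (hp : ∀ w, 0 ≤ p w) (hq : ∀ w, 0 ≤ q w) (hpq : ∀ w, q w = 0 → p w = 0)
    (z : Z) (h : myFib f q z = 0) : myFib f p z = 0 := by
  have h0 : ∀ w ∈ Finset.univ, (if f w = z then q w else 0) = 0 := by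
    rw [← Finset.sum_eq_zero_iff_of_nonneg]
    · exact h
    · intro w _; split <;> simp [hq w]
  apply Finset.sum_eq_zero; intro w _
  split
  · next hf =>
    have := h0 w (Finset.mem_univ w)
    rw [if_pos hf] at this
    exact hpq w this
  · rfl

lemma myFib_comp {W Z₁ Z₂ : Type*} [Fintype W] [Fintype Z₂]
    (f : W → Z₂) (g : Z₂ → Z₁) (p : W → ℝ) (u : Z₁) :
    myFib (fun w => g (f w)) p u =
      ∑ v ∈ Finset.univ.filter (fun v => g v = u), myFib f p v := by
  unfold myFib
  rw [Finset.sum_comm]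
  apply Finset.sum_congr rfl
  intro w _
  rw [Finset.sum_ite_eq (Finset.univ.filter (fun v => g v = u)) (f w)
      (fun _ => p w)]
  simp

/-- Log-sum inequality. -/
lemma logsum {ι : Type*} (s : Finset ι) (a b : ι → ℝ)
    (ha : ∀ i ∈ s, 0 ≤ a i) (hb : ∀ i ∈ s, 0 ≤ b i)
    (hab : ∀ i ∈ s, b i = 0 → a i = 0) :
    myFdiv (∑ i ∈ s, a i) (∑ i ∈ s, b i) ≤ ∑ i ∈ s, myFdiv (a i) (b i) := by
  set A := ∑ i ∈ s, a i with hA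
  set B := ∑ i ∈ s, b i with hB
  have hA0 : 0 ≤ A := Finset.sum_nonneg ha
  rcases eq_or_lt_of_le hA0 with h | hApos
  · -- A = 0
    have hall : ∀ i ∈ s, a i = 0 := by
      intro i hi
      exact (Finset.sum_eq_zero_iff_of_nonneg ha).mp h.symm i hi
    have : ∑ i ∈ s, myFdiv (a i) (b i) = 0 := by
      apply Finset.sum_eq_zero; intro i hi; simp [myFdiv, hall i hi]
    rw [this, myFdiv, ← h]
    simp
  · have hBpos : 0 < B := by
      rcases eq_or_lt_of_le (Finset.sum_nonneg hb) with h | h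
      · exfalso
        have hb0 : ∀ i ∈ s, b i = 0 := by
          intro i hi
          exact (Finset.sum_eq_zero_iff_of_nonneg hb).mp h.symm i hi
        have : A = 0 := Finset.sum_eq_zero fun i hi => hab i hi (hb0 i hi)
        linarith
      · exact h
    have key : ∀ i ∈ s, a i * Real.log (A / B) + a i - b i * (A / B)
        ≤ myFdiv (a i) (b i) := by
      intro i hi
      rcases eq_or_lt_of_le (ha i hi) with h0 | hai
      · rw [myFdiv, ← h0]
        have hb' : 0 ≤ b i * (A / B) := mul_nonneg (hb i hi) (by positivity)
        simp; linarith
      · have hbi : 0 < b i := by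
          rcases eq_or_lt_of_le (hb i hi) with h0 | h0
          · exfalso; have := hab i hi h0.symm; linarith
          · exact h0
        have ht : 0 < (b i * A) / (a i * B) := by positivity
        have hlog := Real.log_le_sub_one_of_pos ht
        have hexp : Real.log ((b i * A) / (a i * B)) =
            Real.log (b i) + Real.log A - Real.log (a i) - Real.log B := by
          rw [Real.log_div (by positivity) (by positivity),
              Real.log_mul (by positivity) (by positivity),
              Real.log_mul (by positivity) (by positivity)]
          ring
        rw [hexp] at hlog
        have hla : Real.log (a i / b i) = Real.log (a i) - Real.log (b i) :=
          Real.log_div (ne_of_gt hai) (ne_of_gt hbi)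
        have hld : Real.log (A / B) = Real.log A - Real.log B :=
          Real.log_div (ne_of_gt hApos) (ne_of_gt hBpos)
        rw [myFdiv, hla, hld]
        have h1 : a i * ((b i * A) / (a i * B)) = b i * (A / B) := by
          field_simp
        nlinarith [mul_le_mul_of_nonneg_left hlog (le_of_lt hai)]
    calc myFdiv A B = ∑ i ∈ s, (a i * Real.log (A / B) + a i - b i * (A / B)) := by
            rw [Finset.sum_sub_distrib, Finset.sum_add_distrib,
                ← Finset.sum_mul, ← Finset.sum_mul, ← hA, ← hB, myFdiv]
            field_simp; ring
      _ ≤ ∑ i ∈ s, myFdiv (a i) (b i) := Finset.sum_le_sum key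

lemma kl_proj_mono {W Z₁ Z₂ : Type*} [Fintype W] [Fintype Z₁] [Fintype Z₂]
    (f : W → Z₂) (g : Z₂ → Z₁) (p q : W → ℝ)
    (hp : ∀ w, 0 ≤ p w) (hq : ∀ w, 0 ≤ q w) (hpq : ∀ w, q w = 0 → p w = 0) :
    ∑ u, myFdiv (myFib (fun w => g (f w)) p u) (myFib (fun w => g (f w)) q u) ≤
      ∑ v, myFdiv (myFib f p v) (myFib f q v) := by
  rw [← Finset.sum_fiberwise_of_maps_to (fun v _ => Finset.mem_univ (g v))
      (fun v => myFdiv (myFib f p v) (myFib f q v))]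
  apply Finset.sum_le_sum
  intro u _
  rw [myFib_comp f g p u, myFib_comp f g q u]
  exact logsum _ _ _ (fun v _ => myFib_nonneg f p hp v)
    (fun v _ => myFib_nonneg f q hq v)
    (fun v _ h => myFib_zero f p q hp hq hpq v h)


lemma marginal_pos (𝒳 : Fin d → Type) [∀ i, Fintype (𝒳 i)] [∀ i, Nonempty (𝒳 i)]
    (π : (∀ i, 𝒳 i) → ℝ) (hπpos : ∀ x, 0 < π x) (S : Finset (Fin d))
    (z : ∀ i : S, 𝒳 i.1) : 0 < marginal 𝒳 π S z := by
  have hx₀ : ∃ x₀ : ∀ i, 𝒳 i, restrict 𝒳 S x₀ = z := by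
    refine ⟨fun i => if h : i ∈ S then z ⟨i, h⟩ else Classical.arbitrary _, ?_⟩
    funext i
    show (if h : i.1 ∈ S then z ⟨i.1, h⟩ else Classical.arbitrary _) = z i
    rw [dif_pos i.2]
  obtain ⟨x₀, hx₀⟩ := hx₀
  rw [marginal]
  apply Finset.sum_pos'
  · intro x _; split
    · exact le_of_lt (hπpos x)
    · rfl
  · exact ⟨x₀, Finset.mem_univ _, by rw [if_pos hx₀]; exact hπpos x₀⟩

lemma distToStat_eq_fib (𝒳 : Fin d → Type) [∀ i, Fintype (𝒳 i)] [∀ i, Nonempty (𝒳 i)]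
    (π : (∀ i, 𝒳 i) → ℝ) (P : (∀ i, 𝒳 i) → (∀ i, 𝒳 i) → ℝ)
    (hπpos : ∀ x, 0 < π x) (S : Finset (Fin d)) :
    distToStat 𝒳 π P S =
      ∑ zw : (∀ i : S, 𝒳 i.1) × (∀ i : S, 𝒳 i.1),
        myFdiv
          (myFib (fun xy : (∀ i, 𝒳 i) × (∀ i, 𝒳 i) =>
              (restrict 𝒳 S xy.1, restrict 𝒳 S xy.2))
            (fun xy => π xy.1 * P xy.1 xy.2) zw)
          (myFib (fun xy : (∀ i, 𝒳 i) × (∀ i, 𝒳 i) =>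
              (restrict 𝒳 S xy.1, restrict 𝒳 S xy.2))
            (fun xy => π xy.1 * π xy.2) zw) := by
  rw [distToStat, klRate, Fintype.sum_prod_type]
  apply Finset.sum_congr rfl; intro z _
  apply Finset.sum_congr rfl; intro w _
  have hz := (marginal_pos 𝒳 π hπpos S z).ne'
  have hN : myFib (fun xy : (∀ i, 𝒳 i) × (∀ i, 𝒳 i) =>
        (restrict 𝒳 S xy.1, restrict 𝒳 S xy.2)) (fun xy => π xy.1 * P xy.1 xy.2) (z, w) =
      ∑ x : ∀ i, 𝒳 i, ∑ y : ∀ i, 𝒳 i,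
        if restrict 𝒳 S x = z ∧ restrict 𝒳 S y = w then π x * P x y else 0 := by
    rw [myFib, Fintype.sum_prod_type]
    simp [Prod.ext_iff]
  have hQ : myFib (fun xy : (∀ i, 𝒳 i) × (∀ i, 𝒳 i) =>
        (restrict 𝒳 S xy.1, restrict 𝒳 S xy.2)) (fun xy => π xy.1 * π xy.2) (z, w) =
      marginal 𝒳 π S z * marginal 𝒳 π S w := by
    rw [myFib, Fintype.sum_prod_type, marginal, marginal, Finset.sum_mul_sum]
    apply Finset.sum_congr rfl; intro x _
    apply Finset.sum_congr rfl; intro y _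
    simp only [Prod.ext_iff, ite_and, mul_ite, ite_mul, mul_zero, zero_mul]
    split_ifs <;> rfl
  rw [hQ, keepIn, ← hN, div_div]
  have h1 : marginal 𝒳 π S z *
      (myFib (fun xy : (∀ i, 𝒳 i) × (∀ i, 𝒳 i) =>
          (restrict 𝒳 S xy.1, restrict 𝒳 S xy.2)) (fun xy => π xy.1 * P xy.1 xy.2) (z, w) /
        marginal 𝒳 π S z) =
      myFib (fun xy : (∀ i, 𝒳 i) × (∀ i, 𝒳 i) =>
          (restrict 𝒳 S xy.1, restrict 𝒳 S xy.2)) (fun xy => π xy.1 * P xy.1 xy.2) (z, w) := by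
    field_simp
  rw [h1, myFdiv]

/-- For a `π`-stationary transition matrix `P` on a finite product state
space, the map `S ↦ D(P^(S) ‖ Π^(S))` is monotonically non-decreasing. -/
theorem distToStat_monotone
    (𝒳 : Fin d → Type) [∀ i, Fintype (𝒳 i)] [∀ i, Nonempty (𝒳 i)]
    (π : (∀ i, 𝒳 i) → ℝ) (P : (∀ i, 𝒳 i) → (∀ i, 𝒳 i) → ℝ)
    (hπpos : ∀ x, 0 < π x) (hπsum : ∑ x, π x = 1)
    (hPnonneg : ∀ x y, 0 ≤ P x y) (hProw : ∀ x, ∑ y, P x y = 1)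
    (hstat : ∀ y, ∑ x, π x * P x y = π y) :
    ∀ S T : Finset (Fin d), S ⊆ T →
      distToStat 𝒳 π P S ≤ distToStat 𝒳 π P T := by
  intro S T hST
  rw [distToStat_eq_fib 𝒳 π P hπpos S, distToStat_eq_fib 𝒳 π P hπpos T]
  have hcomp : (fun xy : (∀ i, 𝒳 i) × (∀ i, 𝒳 i) =>
        (restrict 𝒳 S xy.1, restrict 𝒳 S xy.2)) =
      fun xy : (∀ i, 𝒳 i) × (∀ i, 𝒳 i) =>
        (fun zw : (∀ i : T, 𝒳 i.1) × (∀ i : T, 𝒳 i.1) =>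
            ((fun i : S => zw.1 ⟨i.1, hST i.2⟩ : ∀ i : S, 𝒳 i.1),
             (fun i : S => zw.2 ⟨i.1, hST i.2⟩ : ∀ i : S, 𝒳 i.1)))
          (restrict 𝒳 T xy.1, restrict 𝒳 T xy.2) := rfl
  rw [hcomp]
  exact kl_proj_mono (fun xy : (∀ i, 𝒳 i) × (∀ i, 𝒳 i) =>
      (restrict 𝒳 T xy.1, restrict 𝒳 T xy.2))
    (fun zw => ((fun i : S => zw.1 ⟨i.1, hST i.2⟩), (fun i : S => zw.2 ⟨i.1, hST i.2⟩)))
    (fun xy => π xy.1 * P xy.1 xy.2) (fun xy => π xy.1 * π xy.2)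
    (fun xy => mul_nonneg (le_of_lt (hπpos xy.1)) (hPnonneg xy.1 xy.2))
    (fun xy => le_of_lt (mul_pos (hπpos xy.1) (hπpos xy.2)))
    (fun xy h => absurd h (ne_of_gt (mul_pos (hπpos xy.1) (hπpos xy.2))))


end
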